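/- Let T be a real tridiagonal n×n matrix with all subdiagonal and superdiagonal entries strictly positive, and suppose T has real eigenvalues. Then every eigenvector of T corresponding to its largest eigenvalue has all entries nonzero and of the same sign. -/

import Mathlib

open Matrix

lemma auxMemSpectrum {n : ℕ} (A : Matrix (Fin n) (Fin n) ℝ) (c : ℝ) (w : Fin n → ℝ)
    (hw : w ≠ 0) (h : A.mulVec w = c • w) : c ∈ spectrum ℝ A := by
  rw [spectrum.mem_iff]
  intro hunit
  rw [Matrix.isUnit_iff_isUnit_det] at hunit
  apply hw
  apply Matrix.eq_zero_of_mulVec_eq_zero (isUnit_iff_ne_zero.mp hunit)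
  rw [Matrix.sub_mulVec, Algebra.algebraMap_eq_smul_one, Matrix.smul_mulVec,
    Matrix.one_mulVec, h, sub_self]

lemma auxSpectrumSubset {n : ℕ} (T : Matrix (Fin n) (Fin n) ℝ) (d d' : Fin n → ℝ)
    (h : ∀ i, d i * d' i = 1) :
    spectrum ℝ (Matrix.diagonal d * T * Matrix.diagonal d') ⊆ spectrum ℝ T := by
  intro μ hμ
  rw [spectrum.mem_iff] at hμ ⊢
  intro hT
  apply hμ
  have hdd : Matrix.diagonal d * Matrix.diagonal d' = (1 : Matrix (Fin n) (Fin n) ℝ) := by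
    rw [Matrix.diagonal_mul_diagonal, show (fun i => d i * d' i) = fun _ => (1:ℝ) from funext h,
      Matrix.diagonal_one]
  have hd'd : Matrix.diagonal d' * Matrix.diagonal d = (1 : Matrix (Fin n) (Fin n) ℝ) := by
    rw [Matrix.diagonal_mul_diagonal,
      show (fun i => d' i * d i) = fun _ => (1:ℝ) from funext fun i => by rw [mul_comm]; exact h i,
      Matrix.diagonal_one]
  have hud : IsUnit (Matrix.diagonal d) := ⟨⟨_, _, hdd, hd'd⟩, rfl⟩
  have hud' : IsUnit (Matrix.diagonal d') := ⟨⟨_, _, hd'd, hdd⟩, rfl⟩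
  have key : algebraMap ℝ (Matrix (Fin n) (Fin n) ℝ) μ - Matrix.diagonal d * T * Matrix.diagonal d'
      = Matrix.diagonal d * (algebraMap ℝ (Matrix (Fin n) (Fin n) ℝ) μ - T)
        * Matrix.diagonal d' := by
    rw [Matrix.mul_sub, Matrix.sub_mul]
    congr 1
    rw [Algebra.algebraMap_eq_smul_one, mul_smul_comm, mul_one, smul_mul_assoc, hdd]
  rw [key]
  exact (hud.mul hT).mul hud'

noncomputable def auxD (n : ℕ) (T : Matrix (Fin n) (Fin n) ℝ) : ℕ → ℝ
  | 0 => 1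
  | k + 1 =>
    if h : k + 1 < n then
      auxD n T k *
        Real.sqrt (T ⟨k, Nat.lt_of_succ_lt h⟩ ⟨k + 1, h⟩ / T ⟨k + 1, h⟩ ⟨k, Nat.lt_of_succ_lt h⟩)
    else 1

lemma auxD_pos {n : ℕ} {T : Matrix (Fin n) (Fin n) ℝ}
    (hsup : ∀ i : Fin n, ∀ h : i.val + 1 < n, 0 < T i ⟨i.val + 1, h⟩)
    (hsub : ∀ i : Fin n, ∀ h : i.val + 1 < n, 0 < T ⟨i.val + 1, h⟩ i) :
    ∀ k : ℕ, 0 < auxD n T k := by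
  intro k
  induction k with
  | zero => exact one_pos
  | succ k ih =>
    rw [auxD]
    split
    · rename_i h
      exact mul_pos ih (Real.sqrt_pos.mpr (div_pos
        (hsup ⟨k, Nat.lt_of_succ_lt h⟩ h) (hsub ⟨k, Nat.lt_of_succ_lt h⟩ h)))
    · exact one_pos

lemma auxD_rel {n : ℕ} {T : Matrix (Fin n) (Fin n) ℝ}
    (hsup : ∀ i : Fin n, ∀ h : i.val + 1 < n, 0 < T i ⟨i.val + 1, h⟩)
    (hsub : ∀ i : Fin n, ∀ h : i.val + 1 < n, 0 < T ⟨i.val + 1, h⟩ i)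
    (k : ℕ) (h : k + 1 < n) :
    auxD n T (k + 1) * auxD n T (k + 1) * T ⟨k + 1, h⟩ ⟨k, Nat.lt_of_succ_lt h⟩
      = auxD n T k * auxD n T k * T ⟨k, Nat.lt_of_succ_lt h⟩ ⟨k + 1, h⟩ := by
  have h01 : 0 < T ⟨k, Nat.lt_of_succ_lt h⟩ ⟨k + 1, h⟩ := hsup ⟨k, Nat.lt_of_succ_lt h⟩ h
  have h10 : 0 < T ⟨k + 1, h⟩ ⟨k, Nat.lt_of_succ_lt h⟩ := hsub ⟨k, Nat.lt_of_succ_lt h⟩ h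
  rw [auxD, dif_pos h]
  have hs : Real.sqrt (T ⟨k, Nat.lt_of_succ_lt h⟩ ⟨k + 1, h⟩ / T ⟨k + 1, h⟩ ⟨k, Nat.lt_of_succ_lt h⟩)
      * Real.sqrt (T ⟨k, Nat.lt_of_succ_lt h⟩ ⟨k + 1, h⟩ / T ⟨k + 1, h⟩ ⟨k, Nat.lt_of_succ_lt h⟩)
      = T ⟨k, Nat.lt_of_succ_lt h⟩ ⟨k + 1, h⟩ / T ⟨k + 1, h⟩ ⟨k, Nat.lt_of_succ_lt h⟩ :=
    Real.mul_self_sqrt (le_of_lt (div_pos h01 h10))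
  set g := auxD n T k
  set s := Real.sqrt (T ⟨k, Nat.lt_of_succ_lt h⟩ ⟨k + 1, h⟩ / T ⟨k + 1, h⟩ ⟨k, Nat.lt_of_succ_lt h⟩)
  rw [show g * s * (g * s) * T ⟨k + 1, h⟩ ⟨k, Nat.lt_of_succ_lt h⟩
      = g * g * (s * s * T ⟨k + 1, h⟩ ⟨k, Nat.lt_of_succ_lt h⟩) from by ring, hs,
    div_mul_cancel₀ _ (ne_of_gt h10)]

theorem tridiagonal_top_eigenvector_sign (n : ℕ) (hn : 0 < n)
    (T : Matrix (Fin n) (Fin n) ℝ)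
    (htri : ∀ i j : Fin n, (i.val + 2 ≤ j.val ∨ j.val + 2 ≤ i.val) → T i j = 0)
    (hsup : ∀ i : Fin n, ∀ h : i.val + 1 < n, 0 < T i ⟨i.val + 1, h⟩)
    (hsub : ∀ i : Fin n, ∀ h : i.val + 1 < n, 0 < T ⟨i.val + 1, h⟩ i)
    (hreal : ∀ μ ∈ spectrum ℂ (T.map (Complex.ofReal)), μ.im = 0)
    (θ : ℝ) (hθmem : θ ∈ spectrum ℝ T) (hθmax : ∀ μ ∈ spectrum ℝ T, μ ≤ θ)
    (v : Fin n → ℝ) (hv : v ≠ 0) (heig : T.mulVec v = θ • v) :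
    (∀ i, 0 < v i) ∨ (∀ i, v i < 0) := by
  classical
  set d : Fin n → ℝ := fun i => auxD n T i.val with hd_def
  have hd_pos : ∀ i : Fin n, 0 < d i := fun i => auxD_pos hsup hsub i.val
  set d' : Fin n → ℝ := fun i => (d i)⁻¹ with hd'_def
  have hd'_pos : ∀ i : Fin n, 0 < d' i := fun i => inv_pos.mpr (hd_pos i)
  have hdd' : ∀ i, d i * d' i = 1 := fun i => mul_inv_cancel₀ (ne_of_gt (hd_pos i))
  set S : Matrix (Fin n) (Fin n) ℝ := Matrix.diagonal d * T * Matrix.diagonal d' with hS_def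
  have hSentry : ∀ i j, S i j = d i * T i j * d' j := by
    intro i j
    rw [hS_def, Matrix.mul_diagonal, Matrix.diagonal_mul]
  -- far entries of S vanish
  have hSfar : ∀ i j : Fin n, (i.val + 2 ≤ j.val ∨ j.val + 2 ≤ i.val) → S i j = 0 := by
    intro i j hij
    rw [hSentry, htri i j hij, mul_zero, zero_mul]
  -- adjacent entries are positive
  have hSadj1 : ∀ i : Fin n, ∀ h : i.val + 1 < n, 0 < S i ⟨i.val + 1, h⟩ := by
    intro i h
    rw [hSentry]
    exact mul_pos (mul_pos (hd_pos i) (hsup i h)) (hd'_pos _)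
  have hSadj2 : ∀ i : Fin n, ∀ h : i.val + 1 < n, 0 < S ⟨i.val + 1, h⟩ i := by
    intro i h
    rw [hSentry]
    exact mul_pos (mul_pos (hd_pos _) (hsub i h)) (hd'_pos _)
  -- symmetry
  have hsymm : ∀ i j : Fin n, S j i = S i j := by
    rintro ⟨k, hk⟩ ⟨l, hl⟩
    rcases (by omega : k + 2 ≤ l ∨ l = k + 1 ∨ k = l ∨ k = l + 1 ∨ l + 2 ≤ k) with h | h | h | h | h
    · rw [hSfar ⟨l, hl⟩ ⟨k, hk⟩ (Or.inr h), hSfar ⟨k, hk⟩ ⟨l, hl⟩ (Or.inl h)]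
    · subst h
      rw [hSentry, hSentry]
      have hrel := auxD_rel hsup hsub k hl
      have hk' : d ⟨k, hk⟩ ≠ 0 := ne_of_gt (hd_pos _)
      have hk1' : d ⟨k + 1, hl⟩ ≠ 0 := ne_of_gt (hd_pos _)
      show d ⟨k+1, hl⟩ * T ⟨k+1, hl⟩ ⟨k, hk⟩ * (d ⟨k, hk⟩)⁻¹
        = d ⟨k, hk⟩ * T ⟨k, hk⟩ ⟨k+1, hl⟩ * (d ⟨k+1, hl⟩)⁻¹
      field_simp
      calc d ⟨k+1, hl⟩ ^ 2 * T ⟨k+1, hl⟩ ⟨k, hk⟩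
          = auxD n T (k+1) * auxD n T (k+1) * T ⟨k+1, hl⟩ ⟨k, Nat.lt_of_succ_lt hl⟩ := by ring
        _ = auxD n T k * auxD n T k * T ⟨k, Nat.lt_of_succ_lt hl⟩ ⟨k+1, hl⟩ := hrel
        _ = d ⟨k, hk⟩ ^ 2 * T ⟨k, hk⟩ ⟨k+1, hl⟩ := by ring
    · subst h; rfl
    · subst h
      rw [hSentry, hSentry]
      have hrel := auxD_rel hsup hsub l hk
      show d ⟨l, hl⟩ * T ⟨l, hl⟩ ⟨l+1, hk⟩ * (d ⟨l+1, hk⟩)⁻¹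
        = d ⟨l+1, hk⟩ * T ⟨l+1, hk⟩ ⟨l, hl⟩ * (d ⟨l, hl⟩)⁻¹
      have hk' : d ⟨l, hl⟩ ≠ 0 := ne_of_gt (hd_pos _)
      have hk1' : d ⟨l + 1, hk⟩ ≠ 0 := ne_of_gt (hd_pos _)
      field_simp
      calc d ⟨l, hl⟩ ^ 2 * T ⟨l, hl⟩ ⟨l+1, hk⟩
          = auxD n T l * auxD n T l * T ⟨l, Nat.lt_of_succ_lt hk⟩ ⟨l+1, hk⟩ := by ring
        _ = auxD n T (l+1) * auxD n T (l+1) * T ⟨l+1, hk⟩ ⟨l, Nat.lt_of_succ_lt hk⟩ := hrel.symm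
        _ = d ⟨l+1, hk⟩ ^ 2 * T ⟨l+1, hk⟩ ⟨l, hl⟩ := by ring
    · rw [hSfar ⟨l, hl⟩ ⟨k, hk⟩ (Or.inl h), hSfar ⟨k, hk⟩ ⟨l, hl⟩ (Or.inr h)]
  have hS : S.IsHermitian := by
    refine Matrix.ext fun i j => ?_
    rw [Matrix.conjTranspose_apply, star_trivial]
    exact hsymm i j
  have hspec : spectrum ℝ S ⊆ spectrum ℝ T := auxSpectrumSubset T d d' hdd'
  -- eigenvector u of S
  set u : Fin n → ℝ := fun i => d i * v i with hu_def
  have hdiagu : Matrix.diagonal d' *ᵥ u = v := by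
    funext i
    rw [Matrix.mulVec_diagonal]
    exact inv_mul_cancel_left₀ (ne_of_gt (hd_pos i)) (v i)
  have hSu : S *ᵥ u = θ • u := by
    have h1 : S *ᵥ u = Matrix.diagonal d *ᵥ (T *ᵥ (Matrix.diagonal d' *ᵥ u)) := by
      rw [Matrix.mulVec_mulVec, Matrix.mulVec_mulVec]
    rw [h1, hdiagu, heig, Matrix.mulVec_smul]
    congr 1
    funext i
    exact Matrix.mulVec_diagonal d v i
  have hu0 : u ≠ 0 := by
    intro h0
    apply hv
    funext i
    have := congrFun h0 i
    show v i = 0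
    have hne : d i ≠ 0 := ne_of_gt (hd_pos i)
    exact (mul_eq_zero.mp this).resolve_left hne
  -- the matrix θ•1 - S is PSD
  set M : Matrix (Fin n) (Fin n) ℝ := θ • (1 : Matrix (Fin n) (Fin n) ℝ) - S with hM_def
  have hMvec : ∀ x : Fin n → ℝ, M *ᵥ x = θ • x - S *ᵥ x := by
    intro x
    rw [hM_def, Matrix.sub_mulVec, Matrix.smul_mulVec, Matrix.one_mulVec]
  have hM : M.IsHermitian := by
    refine Matrix.ext fun i j => ?_
    rw [Matrix.conjTranspose_apply, star_trivial]
    show θ • (1 : Matrix (Fin n) (Fin n) ℝ) j i - S j i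
      = θ • (1 : Matrix (Fin n) (Fin n) ℝ) i j - S i j
    rw [hsymm i j]
    by_cases hij : i = j
    · subst hij; rfl
    · rw [Matrix.one_apply_ne (Ne.symm hij), Matrix.one_apply_ne hij]
  have hMpsd : M.PosSemidef := by
    apply hM.posSemidef_iff_eigenvalues_nonneg.mpr
    intro k
    set μ := hM.eigenvalues k with hμ_def
    have hw := hM.mulVec_eigenvectorBasis k
    set w : Fin n → ℝ := ⇑(hM.eigenvectorBasis k) with hw_def
    have hwne : w ≠ 0 := by
      intro h0
      apply hM.eigenvectorBasis.orthonormal.ne_zero k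
      ext i
      exact congrFun h0 i
    have hSw : S *ᵥ w = (θ - μ) • w := by
      have h2 : S *ᵥ w = θ • w - M *ᵥ w := by rw [hMvec w, sub_sub_cancel]
      rw [h2, hw, ← sub_smul]
    have hmem : θ - μ ∈ spectrum ℝ T := hspec (auxMemSpectrum S _ w hwne hSw)
    rw [Pi.zero_apply]; linarith [hθmax _ hmem]
  -- absolute value vector
  set a : Fin n → ℝ := fun i => |u i| with ha_def
  have ha_nonneg : ∀ i, 0 ≤ a i := fun i => abs_nonneg _
  have haa : a ⬝ᵥ a = u ⬝ᵥ u := by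
    apply Finset.sum_congr rfl
    intro i _
    exact abs_mul_abs_self (u i)
  have hstar : ∀ x : Fin n → ℝ, star x = x := fun x => funext fun i => star_trivial _
  -- dot products
  have hMa_nonneg : 0 ≤ a ⬝ᵥ (M *ᵥ a) := by
    have := hMpsd.dotProduct_mulVec_nonneg a
    rwa [hstar a] at this
  have hMa_val : a ⬝ᵥ (M *ᵥ a) = θ * (a ⬝ᵥ a) - a ⬝ᵥ (S *ᵥ a) := by
    rw [hMvec a, dotProduct_sub, dotProduct_smul, smul_eq_mul]
  have hEu : u ⬝ᵥ (S *ᵥ u) = θ * (u ⬝ᵥ u) := by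
    rw [hSu, dotProduct_smul, smul_eq_mul]
  -- double-sum decomposition
  have hQdiff : a ⬝ᵥ (S *ᵥ a) - u ⬝ᵥ (S *ᵥ u)
      = ∑ i : Fin n, ∑ j : Fin n, S i j * (a i * a j - u i * u j) := by
    simp only [dotProduct, Matrix.mulVec, Finset.mul_sum, ← Finset.sum_sub_distrib]
    refine Finset.sum_congr rfl fun i _ => Finset.sum_congr rfl fun j _ => by ring
  have hterm : ∀ i j : Fin n, 0 ≤ S i j * (a i * a j - u i * u j) := by
    rintro ⟨k, hk⟩ ⟨l, hl⟩
    rcases (by omega : k + 2 ≤ l ∨ l = k + 1 ∨ k = l ∨ k = l + 1 ∨ l + 2 ≤ k) with h | h | h | h | h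
    · rw [hSfar _ _ (Or.inl h), zero_mul]
    · refine mul_nonneg ?_ ?_
      · subst h; exact le_of_lt (hSadj1 ⟨k, Nat.lt_of_succ_lt hl⟩ hl)
      · have : u ⟨k, hk⟩ * u ⟨l, hl⟩ ≤ a ⟨k, hk⟩ * a ⟨l, hl⟩ := by
          rw [ha_def]
          calc u ⟨k, hk⟩ * u ⟨l, hl⟩ ≤ |u ⟨k, hk⟩ * u ⟨l, hl⟩| := le_abs_self _
            _ = |u ⟨k, hk⟩| * |u ⟨l, hl⟩| := abs_mul _ _
        linarith
    · have hkl : (⟨k, hk⟩ : Fin n) = ⟨l, hl⟩ := by subst h; rfl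
      rw [hkl]
      have : a ⟨l, hl⟩ * a ⟨l, hl⟩ - u ⟨l, hl⟩ * u ⟨l, hl⟩ = 0 := by
        rw [ha_def]
        simp [abs_mul_abs_self]
      rw [this, mul_zero]
    · refine mul_nonneg ?_ ?_
      · subst h; exact le_of_lt (hSadj2 ⟨l, Nat.lt_of_succ_lt hk⟩ hk)
      · have : u ⟨k, hk⟩ * u ⟨l, hl⟩ ≤ a ⟨k, hk⟩ * a ⟨l, hl⟩ := by
          rw [ha_def]
          calc u ⟨k, hk⟩ * u ⟨l, hl⟩ ≤ |u ⟨k, hk⟩ * u ⟨l, hl⟩| := le_abs_self _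
            _ = |u ⟨k, hk⟩| * |u ⟨l, hl⟩| := abs_mul _ _
        linarith
    · rw [hSfar _ _ (Or.inr h), zero_mul]
  -- upper bound from PSD, lower bound from terms: total is zero
  have hsum0 : ∑ i : Fin n, ∑ j : Fin n, S i j * (a i * a j - u i * u j) = 0 := by
    have hle : a ⬝ᵥ (S *ᵥ a) ≤ θ * (a ⬝ᵥ a) := by linarith
    have hge : (0:ℝ) ≤ a ⬝ᵥ (S *ᵥ a) - u ⬝ᵥ (S *ᵥ u) := by
      rw [hQdiff]
      exact Finset.sum_nonneg fun i _ => Finset.sum_nonneg fun j _ => hterm i j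
    rw [← hQdiff]
    have : θ * (a ⬝ᵥ a) = θ * (u ⬝ᵥ u) := by rw [haa]
    linarith
  have hzero : ∀ i j : Fin n, S i j * (a i * a j - u i * u j) = 0 := by
    have h1 := (Finset.sum_eq_zero_iff_of_nonneg
      (fun i _ => Finset.sum_nonneg fun j _ => hterm i j)).mp hsum0
    intro i j
    have h2 := (Finset.sum_eq_zero_iff_of_nonneg (fun j _ => hterm i j)).mp
      (h1 i (Finset.mem_univ i))
    exact h2 j (Finset.mem_univ j)
  -- S *ᵥ a = θ • a
  have hSa : S *ᵥ a = θ • a := by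
    have hMa0 : a ⬝ᵥ (M *ᵥ a) = 0 := by
      have : a ⬝ᵥ (S *ᵥ a) - u ⬝ᵥ (S *ᵥ u) = 0 := by rw [hQdiff]; exact hsum0
      rw [hMa_val, haa]
      linarith
    have := (hMpsd.dotProduct_mulVec_zero_iff a).mp (by rwa [hstar a])
    have h3 : θ • a - S *ᵥ a = 0 := by rw [← hMvec a]; exact this
    funext i
    have := congrFun h3 i
    simp only [Pi.sub_apply, Pi.zero_apply, sub_eq_zero] at this
    exact this.symm
  -- zero propagation to neighbors
  have hstep : ∀ i j : Fin n, a i = 0 → (j.val = i.val + 1 ∨ i.val = j.val + 1) → a j = 0 := by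
    intro i j hai hadj
    have hrow : ∑ l : Fin n, S i l * a l = 0 := by
      have := congrFun hSa i
      simp only [Matrix.mulVec, dotProduct, Pi.smul_apply, smul_eq_mul] at this
      rw [this, hai, mul_zero]
    have hnn : ∀ l : Fin n, l ∈ Finset.univ → 0 ≤ S i l * a l := by
      rintro ⟨m, hm⟩ _
      obtain ⟨k, hk⟩ := i
      rcases (by omega : k + 2 ≤ m ∨ m = k + 1 ∨ k = m ∨ k = m + 1 ∨ m + 2 ≤ k)
        with h | h | h | h | h
      · rw [hSfar _ _ (Or.inl h), zero_mul]
      · subst h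
        exact mul_nonneg (le_of_lt (hSadj1 ⟨k, Nat.lt_of_succ_lt hm⟩ hm)) (ha_nonneg _)
      · have hz : a ⟨m, hm⟩ = 0 := by subst h; exact hai
        rw [hz, mul_zero]
      · subst h
        exact mul_nonneg (le_of_lt (hSadj2 ⟨m, Nat.lt_of_succ_lt hk⟩ hk)) (ha_nonneg _)
      · rw [hSfar _ _ (Or.inr h), zero_mul]
    have hterms := (Finset.sum_eq_zero_iff_of_nonneg hnn).mp hrow
    have hSij : 0 < S i j := by
      rcases hadj with h | h
      · have : j = ⟨i.val + 1, by omega⟩ := by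
          apply Fin.ext
          exact h
        rw [this]
        exact hSadj1 i (by omega)
      · have : i = ⟨j.val + 1, by omega⟩ := by
          apply Fin.ext
          exact h
        rw [this]
        exact hSadj2 j (by omega)
    have := hterms j (Finset.mem_univ j)
    rcases mul_eq_zero.mp this with h | h
    · exact absurd h (ne_of_gt hSij)
    · exact h
  -- a is everywhere zero if anywhere zero; but u ≠ 0, so a is nowhere zero
  have hane : ∀ i : Fin n, a i ≠ 0 := by
    intro i0 hai0
    have hdown : ∀ k : ℕ, ∀ h : k < n, a ⟨k, h⟩ = 0 → a ⟨0, hn⟩ = 0 := by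
      intro k
      induction k with
      | zero => intro h h0; exact h0
      | succ k ih =>
        intro h h0
        have hk : k < n := Nat.lt_of_succ_lt h
        have : a ⟨k, hk⟩ = 0 := hstep ⟨k+1, h⟩ ⟨k, hk⟩ h0 (Or.inr rfl)
        exact ih hk this
    have h00 : a ⟨0, hn⟩ = 0 := hdown i0.val i0.isLt (by
      have : (⟨i0.val, i0.isLt⟩ : Fin n) = i0 := Fin.ext rfl
      rw [this]; exact hai0)
    have hup : ∀ k : ℕ, ∀ h : k < n, a ⟨k, h⟩ = 0 := by
      intro k
      induction k with
      | zero => intro h; exact h00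
      | succ k ih =>
        intro h
        have hk : k < n := Nat.lt_of_succ_lt h
        exact hstep ⟨k, hk⟩ ⟨k+1, h⟩ (ih hk) (Or.inl rfl)
    apply hu0
    funext i
    have := hup i.val i.isLt
    have hi : (⟨i.val, i.isLt⟩ : Fin n) = i := Fin.ext rfl
    rw [hi] at this
    exact abs_eq_zero.mp this
  have hapos : ∀ i, 0 < a i := fun i => lt_of_le_of_ne (ha_nonneg i) (Ne.symm (hane i))
  -- adjacent entries of u have the same sign
  have hadj : ∀ k : ℕ, ∀ h : k + 1 < n, 0 < u ⟨k, Nat.lt_of_succ_lt h⟩ * u ⟨k+1, h⟩ := by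
    intro k h
    have hz := hzero ⟨k, Nat.lt_of_succ_lt h⟩ ⟨k+1, h⟩
    have hS' : S ⟨k, Nat.lt_of_succ_lt h⟩ ⟨k+1, h⟩ ≠ 0 :=
      ne_of_gt (hSadj1 ⟨k, Nat.lt_of_succ_lt h⟩ h)
    have h2 := (mul_eq_zero.mp hz).resolve_left hS'
    have h3 : u ⟨k, Nat.lt_of_succ_lt h⟩ * u ⟨k+1, h⟩
        = a ⟨k, Nat.lt_of_succ_lt h⟩ * a ⟨k+1, h⟩ := by linarith
    rw [h3]
    exact mul_pos (hapos _) (hapos _)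
  -- conclude: sign of u (and hence of v) is constant
  have husign : (∀ i : Fin n, 0 < u i) ∨ (∀ i : Fin n, u i < 0) := by
    rcases lt_trichotomy (u ⟨0, hn⟩) 0 with h0 | h0 | h0
    · right
      have key : ∀ k : ℕ, ∀ h : k < n, u ⟨k, h⟩ < 0 := by
        intro k
        induction k with
        | zero => intro h; exact h0
        | succ k ih =>
          intro h
          have hk : k < n := Nat.lt_of_succ_lt h
          have := hadj k h
          have huk := ih hk
          nlinarith
      intro i
      have := key i.val i.isLt
      rwa [show (⟨i.val, i.isLt⟩ : Fin n) = i from Fin.ext rfl] at this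
    · exact absurd (abs_eq_zero.mpr h0) (hane ⟨0, hn⟩)
    · left
      have key : ∀ k : ℕ, ∀ h : k < n, 0 < u ⟨k, h⟩ := by
        intro k
        induction k with
        | zero => intro h; exact h0
        | succ k ih =>
          intro h
          have hk : k < n := Nat.lt_of_succ_lt h
          have := hadj k h
          have huk := ih hk
          nlinarith
      intro i
      have := key i.val i.isLt
      rwa [show (⟨i.val, i.isLt⟩ : Fin n) = i from Fin.ext rfl] at this
  -- transfer sign from u to v
  rcases husign with h | h
  · left
    intro i
    have hu := h i
    have hd := hd_pos i
    have : u i = d i * v i := rfl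
    nlinarith
  · right
    intro i
    have hu := h i
    have hd := hd_pos i
    have : u i = d i * v i := rfl
    nlinarith
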